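/- Let b > a > 0 and suppose (μ_m)_{m≥0} is a real sequence with μ_0 = 1 satisfying μ_{m+1} = ((m+a)/b) μ_m − (m/b)·π for all m ≥ 0, where π = b^a/(b^a + Γ(a,b)(b−a)e^b). Then μ_m = E[Z^m] for all m, where Z has the Langmuir-incomplete gamma distribution LIG(a,b). In particular such a solution sequence is unique. -/

import Mathlib

open MeasureTheory Real Filter Finset

/-- Lower incomplete gamma function `Γ(a,b) = ∫_0^b s^(a-1) e^(-s) ds`. -/
noncomputable def lGamma (a b : ℝ) : ℝ := ∫ s in (0:ℝ)..b, s ^ (a - 1) * Real.exp (-s)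

/-- The incomplete gamma distribution `IG(a,b,1)` with density
`Γ(a,b)⁻¹ b^a x^(a-1) e^(-bx)` on `(0,1)`. -/
noncomputable def igMeasure (a b : ℝ) : Measure ℝ :=
  (volume.restrict (Set.Ioo (0:ℝ) 1)).withDensity
    (fun x => ENNReal.ofReal ((lGamma a b)⁻¹ * b ^ a * x ^ (a - 1) * Real.exp (-(b * x))))

/-- The boundary atom mass `π_{a,b} = b^a / (b^a + Γ(a,b)(b-a)e^b)`. -/
noncomputable def ligPi (a b : ℝ) : ℝ :=
  b ^ a / (b ^ a + lGamma a b * (b - a) * Real.exp b)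

/-- The Langmuir-incomplete gamma distribution `LIG(a,b)`: the mixture
`(1-π_{a,b}) IG(a,b,1) + π_{a,b} δ_1`. -/
noncomputable def ligMeasure (a b : ℝ) : Measure ℝ :=
  ENNReal.ofReal (1 - ligPi a b) • igMeasure a b +
    ENNReal.ofReal (ligPi a b) • Measure.dirac 1

namespace LigAux

open scoped NNReal ENNReal

/-- The auxiliary integral `I(b,p) = ∫_0^1 x^(p-1) e^(-bx) dx`. -/
noncomputable def I (b p : ℝ) : ℝ := ∫ x in (0:ℝ)..1, x ^ (p - 1) * Real.exp (-(b * x))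

lemma intInt (b : ℝ) {p : ℝ} (hp : 0 < p) :
    IntervalIntegrable (fun x => x ^ (p - 1) * Real.exp (-(b * x))) volume 0 1 := by
  apply (intervalIntegral.intervalIntegrable_rpow'
    (by linarith : (-1:ℝ) < p - 1)).mul_continuousOn
  fun_prop

lemma I_pos {b p : ℝ} (hp : 0 < p) : 0 < I b p := by
  apply intervalIntegral.intervalIntegral_pos_of_pos_on (intInt b hp) _ one_pos
  intro x hx
  exact mul_pos (Real.rpow_pos_of_pos hx.1 _) (Real.exp_pos _)

lemma lGamma_pos {a b : ℝ} (ha : 0 < a) (hb : 0 < b) : 0 < lGamma a b := by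
  apply intervalIntegral.intervalIntegral_pos_of_pos_on _ _ hb
  · apply (intervalIntegral.intervalIntegrable_rpow'
      (by linarith : (-1:ℝ) < a - 1)).mul_continuousOn
    fun_prop
  · intro x hx
    exact mul_pos (Real.rpow_pos_of_pos hx.1 _) (Real.exp_pos _)

lemma lGamma_eq {a b : ℝ} (ha : 0 < a) (hb : 0 < b) : lGamma a b = b ^ a * I b a := by
  have h1 : (∫ x in (0:ℝ)..1, ((fun s => s ^ (a-1) * Real.exp (-s)) (b * x)))
      = b⁻¹ • ∫ s in (b*0)..(b*1), s ^ (a-1) * Real.exp (-s) :=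
    intervalIntegral.integral_comp_mul_left (fun s => s ^ (a-1) * Real.exp (-s)) hb.ne'
  have h2 : (∫ x in (0:ℝ)..1, ((fun s => s ^ (a-1) * Real.exp (-s)) (b * x)))
      = b ^ (a-1) * I b a := by
    rw [I, ← intervalIntegral.integral_const_mul]
    apply intervalIntegral.integral_congr
    intro x hx
    simp only [Set.uIcc_of_le (zero_le_one' ℝ), Set.mem_Icc] at hx
    simp only
    rw [Real.mul_rpow hb.le hx.1]
    ring
  rw [mul_zero, mul_one] at h1
  have : lGamma a b = b * (b ^ (a-1) * I b a) := by
    rw [← h2, h1, smul_eq_mul, lGamma]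
    field_simp
  rw [this, ← mul_assoc, ← Real.rpow_one_add' (by positivity) (by intro h; simp at h; linarith)]
  ring_nf

lemma I_rec {b p : ℝ} (hp : 0 < p) :
    p * I b p - b * I b (p + 1) = Real.exp (-b) := by
  have key : (∫ x in (0:ℝ)..1,
        (p * (x ^ (p-1) * Real.exp (-(b*x))) - b * (x ^ ((p+1)-1) * Real.exp (-(b*x)))))
      = (fun x : ℝ => x ^ p * Real.exp (-(b*x))) 1 - (fun x : ℝ => x ^ p * Real.exp (-(b*x))) 0 := by
    apply intervalIntegral.integral_eq_sub_of_hasDerivAt_of_le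
      (f := fun x : ℝ => x ^ p * Real.exp (-(b*x))) zero_le_one
    · apply ContinuousOn.mul
      · intro x _
        exact (Real.continuousAt_rpow_const x p (Or.inr hp.le)).continuousWithinAt
      · fun_prop
    · intro x hx
      have h1 : HasDerivAt (fun y : ℝ => y ^ p) (p * x ^ (p-1)) x :=
        Real.hasDerivAt_rpow_const (Or.inl hx.1.ne')
      have h2 : HasDerivAt (fun y : ℝ => Real.exp (-(b*y))) (Real.exp (-(b*x)) * (-b)) x := by
        have := (((hasDerivAt_id x).const_mul b).neg).exp
        simpa using this
      have := h1.mul h2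
      convert this using 1 <;> try rfl
      simp only [add_sub_cancel_right]
      ring
    · exact ((intInt b hp).const_mul p).sub ((intInt b (by linarith : (0:ℝ) < p+1)).const_mul b)
  rw [intervalIntegral.integral_sub ((intInt b hp).const_mul p)
      ((intInt b (by linarith : (0:ℝ) < p+1)).const_mul b),
    intervalIntegral.integral_const_mul, intervalIntegral.integral_const_mul] at key
  simp only [Real.one_rpow, Real.zero_rpow hp.ne', mul_one, mul_zero, one_mul, zero_mul] at key
  simpa [I] using key

variable {a b : ℝ}

lemma dens_meas : Measurable (fun x : ℝ =>
    Real.toNNReal ((lGamma a b)⁻¹ * b ^ a * x ^ (a - 1) * Real.exp (-(b * x)))) := by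
  fun_prop

lemma ig_eq : igMeasure a b = (volume.restrict (Set.Ioo (0:ℝ) 1)).withDensity
    (fun x => ((Real.toNNReal ((lGamma a b)⁻¹ * b ^ a * x ^ (a - 1) * Real.exp (-(b * x))) : ℝ≥0)
      : ℝ≥0∞)) := rfl

lemma dens_pos (ha : 0 < a) (hb : 0 < b) (hΓ : 0 < lGamma a b) {x : ℝ}
    (hx : x ∈ Set.Ioo (0:ℝ) 1) :
    0 ≤ (lGamma a b)⁻¹ * b ^ a * x ^ (a - 1) * Real.exp (-(b * x)) := by
  have := Real.rpow_pos_of_pos hx.1 (a - 1)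
  have := Real.rpow_pos_of_pos hb a
  positivity

lemma ig_integrable (ha : 0 < a) (hb : 0 < b) (hΓ : 0 < lGamma a b) (m : ℕ) :
    Integrable (fun x : ℝ => x ^ m) (igMeasure a b) := by
  rw [ig_eq, integrable_withDensity_iff_integrable_smul dens_meas]
  have h : IntervalIntegrable
      (fun x : ℝ => ((lGamma a b)⁻¹ * b ^ a) * ((x ^ (a-1) * Real.exp (-(b*x))) * x ^ m))
      volume 0 1 :=
    (((intInt b ha).mul_continuousOn (by fun_prop)).const_mul _)
  have h2 : IntegrableOn
      (fun x : ℝ => ((lGamma a b)⁻¹ * b ^ a) * ((x ^ (a-1) * Real.exp (-(b*x))) * x ^ m))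
      (Set.Ioo (0:ℝ) 1) volume :=
    (intervalIntegrable_iff_integrableOn_Ioo_of_le zero_le_one).mp h
  apply (h2.congr_fun _ measurableSet_Ioo)
  intro x hx
  simp only [NNReal.smul_def, smul_eq_mul]
  rw [Real.coe_toNNReal _ (dens_pos ha hb hΓ hx)]
  ring

lemma ig_moment (ha : 0 < a) (hb : 0 < b) (hΓ : 0 < lGamma a b) (m : ℕ) :
    ∫ x, x ^ m ∂(igMeasure a b) = (lGamma a b)⁻¹ * b ^ a * I b ((m : ℝ) + a) := by
  rw [ig_eq, integral_withDensity_eq_integral_smul dens_meas]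
  have hcong : ∫ x in Set.Ioo (0:ℝ) 1,
        (Real.toNNReal ((lGamma a b)⁻¹ * b ^ a * x ^ (a - 1) * Real.exp (-(b * x)))) • x ^ m
      = ∫ x in Set.Ioo (0:ℝ) 1,
        (lGamma a b)⁻¹ * b ^ a * (x ^ ((m:ℝ) + a - 1) * Real.exp (-(b*x))) := by
    apply setIntegral_congr_fun measurableSet_Ioo
    intro x hx
    simp only [NNReal.smul_def, smul_eq_mul]
    rw [Real.coe_toNNReal _ (dens_pos ha hb hΓ hx)]
    rw [show ((m:ℝ) + a - 1) = (a - 1) + m by ring, Real.rpow_add hx.1, Real.rpow_natCast]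
    ring
  rw [hcong, ← integral_Ioc_eq_integral_Ioo, ← intervalIntegral.integral_of_le zero_le_one,
    intervalIntegral.integral_const_mul]
  rfl

lemma denom_pos (ha : 0 < a) (hab : a < b) :
    0 < b ^ a + lGamma a b * (b - a) * Real.exp b := by
  have hb : 0 < b := ha.trans hab
  have h1 := lGamma_pos ha hb
  have h2 := Real.rpow_pos_of_pos hb a
  have h4 : 0 < lGamma a b * (b - a) * Real.exp b :=
    mul_pos (mul_pos h1 (by linarith)) (Real.exp_pos b)
  linarith

lemma pi_pos (ha : 0 < a) (hab : a < b) : 0 < ligPi a b :=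
  div_pos (Real.rpow_pos_of_pos (ha.trans hab) a) (denom_pos ha hab)

lemma pi_lt_one (ha : 0 < a) (hab : a < b) : ligPi a b < 1 := by
  rw [ligPi, div_lt_one (denom_pos ha hab)]
  have hb : 0 < b := ha.trans hab
  have h1 := lGamma_pos ha hb
  have h4 : 0 < lGamma a b * (b - a) * Real.exp b :=
    mul_pos (mul_pos h1 (by linarith)) (Real.exp_pos b)
  linarith

/-- The key algebraic identity relating `π` and the other constants. -/
lemma key_identity (ha : 0 < a) (hab : a < b) :
    (1 - ligPi a b) * b ^ a * Real.exp (-b) = ligPi a b * (b - a) * lGamma a b := by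
  have hD := (denom_pos ha hab).ne'
  rw [ligPi, Real.exp_neg]
  field_simp
  ring

lemma dirac_integrable (m : ℕ) : Integrable (fun x : ℝ => x ^ m) (Measure.dirac 1) := by
  constructor
  · exact (continuous_pow m).aestronglyMeasurable
  · rw [HasFiniteIntegral, lintegral_dirac]
    exact ENNReal.coe_lt_top

lemma lig_moment (ha : 0 < a) (hab : a < b) (m : ℕ) :
    ∫ x, x ^ m ∂(ligMeasure a b)
      = (1 - ligPi a b) * ((lGamma a b)⁻¹ * b ^ a * I b ((m : ℝ) + a)) + ligPi a b := by
  have hb : 0 < b := ha.trans hab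
  have hΓ := lGamma_pos ha hb
  rw [ligMeasure, integral_add_measure
      ((ig_integrable ha hb hΓ m).smul_measure ENNReal.ofReal_ne_top)
      ((dirac_integrable m).smul_measure ENNReal.ofReal_ne_top),
    integral_smul_measure, integral_smul_measure, integral_dirac,
    ig_moment ha hb hΓ m,
    ENNReal.toReal_ofReal (by linarith [pi_lt_one ha hab]),
    ENNReal.toReal_ofReal (pi_pos ha hab).le]
  simp [smul_eq_mul]

end LigAux

open LigAux in
/-- Any real sequence with `μ_0 = 1` satisfying
`μ_{m+1} = ((m+a)/b) μ_m - (m/b) π_{a,b}` (`b > a > 0`) is exactly the moment sequence of the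
Langmuir-incomplete gamma distribution `LIG(a,b)` (in particular it is unique). -/
theorem lig_moment_solution (a b : ℝ) (μ : ℕ → ℝ)
    (ha : 0 < a) (hab : a < b)
    (h0 : μ 0 = 1)
    (hrec : ∀ m : ℕ, μ (m + 1) = ((m + a) / b) * μ m - (m / b) * ligPi a b) :
    ∀ m : ℕ, μ m = ∫ x, x ^ m ∂(ligMeasure a b) := by
  have hb : 0 < b := ha.trans hab
  have hΓ := lGamma_pos ha hb
  intro m
  induction m with
  | zero =>
      rw [h0, lig_moment ha hab 0]
      have h1 : ((0:ℕ):ℝ) + a = a := by simp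
      rw [h1]
      have h2 : (lGamma a b)⁻¹ * b ^ a * I b a = 1 := by
        rw [mul_assoc, ← lGamma_eq ha hb]
        exact inv_mul_cancel₀ hΓ.ne'
      rw [h2]
      ring
  | succ m ih =>
      rw [hrec m, ih, lig_moment ha hab m, lig_moment ha hab (m+1)]
      have hcast : ((m+1 : ℕ) : ℝ) + a = ((m:ℝ) + a) + 1 := by push_cast; ring
      rw [hcast]
      have hIr := I_rec (b := b) (show (0:ℝ) < (m:ℝ) + a by positivity)
      have hkey := key_identity ha hab
      set q := ligPi a b with hq
      set G := lGamma a b with hG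
      set Im := I b ((m:ℝ) + a) with hIm
      set Im1 := I b ((m:ℝ) + a + 1) with hIm1
      field_simp
      linear_combination ((1 - q) * b ^ a) * hIr + hkey
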